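/- Let E be a finite-dimensional real inner product space and C ⊆ E an open convex cone which is acute, meaning ⟨u, v⟩ ≥ 0 for all u, v in the closure of C. Then for every e ∈ C, the infimum over nonzero x ∈ C of ⟨x, e⟩ / ‖x‖ is strictly positive. -/
import Mathlib


open scoped RealInnerProductSpace

/-- Let `E` be a finite-dimensional real inner product space and `C ⊆ E` an
open convex cone which is acute (`⟪u, v⟫ ≥ 0` for all `u, v` in the closure of
`C`).  Then for every `e ∈ C` the infimum over nonzero `x ∈ C` of
`⟪x, e⟫ / ‖x‖` is strictly positive: there is `k > 0` with
`k ≤ ⟪x, e⟫ / ‖x‖` for all nonzero `x ∈ C`. -/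
theorem stmt_13
    {E : Type*} [NormedAddCommGroup E] [InnerProductSpace ℝ E]
    [FiniteDimensional ℝ E]
    (C : Set E) (hopen : IsOpen C) (hconv : Convex ℝ C) (hne : C.Nonempty)
    (hcone : ∀ x ∈ C, ∀ t : ℝ, 0 < t → t • x ∈ C)
    (hacute : ∀ u ∈ closure C, ∀ v ∈ closure C, 0 ≤ ⟪u, v⟫)
    (e : E) (he : e ∈ C) :
    ∃ k : ℝ, 0 < k ∧ ∀ x ∈ C, x ≠ 0 → k ≤ ⟪x, e⟫ / ‖x‖ := by
  by_cases hS : ∃ x ∈ C, x ≠ 0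
  · obtain ⟨y, hyC, hy0⟩ := hS
    set S : Set E := closure C ∩ Metric.sphere (0 : E) 1 with hSdef
    have hScomp : IsCompact S := ((isCompact_sphere (0 : E) 1).inter_left isClosed_closure)
    have hmem : ∀ x ∈ C, x ≠ 0 → (‖x‖⁻¹ • x) ∈ S := by
      intro x hx hx0
      have hnorm : ‖x‖ ≠ 0 := norm_ne_zero_iff.mpr hx0
      refine ⟨subset_closure (hcone x hx _ (by positivity)), ?_⟩
      simp [norm_smul, abs_of_nonneg (inv_nonneg.mpr (norm_nonneg x)),
        inv_mul_cancel₀ hnorm]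
    have hSne : S.Nonempty := ⟨‖y‖⁻¹ • y, hmem y hyC hy0⟩
    have hcont : ContinuousOn (fun x : E => ⟪x, e⟫) S :=
      (continuous_inner.comp (continuous_id.prodMk continuous_const)).continuousOn
    obtain ⟨x₀, hx₀S, hmin⟩ := hScomp.exists_isMinOn hSne hcont
    refine ⟨⟪x₀, e⟫, ?_, ?_⟩
    · have hnn : 0 ≤ ⟪x₀, e⟫ := hacute x₀ hx₀S.1 e (subset_closure he)
      rcases hnn.lt_or_eq with h | h
      · exact h
      · exfalso
        obtain ⟨ε, hε, hball⟩ := Metric.isOpen_iff.mp hopen e he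
        have hnx₀ : ‖x₀‖ = 1 := by
          simpa using hx₀S.2
        have hmem' : e - (ε / 2) • x₀ ∈ C := by
          apply hball
          simp [dist_eq_norm, norm_smul, hnx₀, abs_of_pos hε]
          linarith
        have := hacute x₀ hx₀S.1 _ (subset_closure hmem')
        rw [inner_sub_right, real_inner_smul_right, real_inner_self_eq_norm_sq, hnx₀] at this
        rw [← h] at this
        nlinarith
    · intro x hx hx0
      have hnorm : (0:ℝ) < ‖x‖ := norm_pos_iff.mpr hx0
      have := hmin (hmem x hx hx0)
      rw [Set.mem_setOf_eq] at this  -- maybe unnecessary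
      have h2 : ⟪‖x‖⁻¹ • x, e⟫ = ⟪x, e⟫ / ‖x‖ := by
        rw [real_inner_smul_left]; ring
      calc ⟪x₀, e⟫ ≤ ⟪‖x‖⁻¹ • x, e⟫ := this
        _ = ⟪x, e⟫ / ‖x‖ := h2
  · push_neg at hS
    exact ⟨1, one_pos, fun x hx hx0 => absurd (hS x hx) hx0⟩
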